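/- Let ρ, σ be d×d density matrices, Λ = sqrt(ρ)σsqrt(ρ), r = min{rank(ρ), rank(σ)}, and let Λ̂ be any Hermitian d×d matrix with rank(Λ̂) ≤ rank(Λ). Setting F̂ = Tr[sqrt(Λ̂₊)] where Λ̂₊ is the positive part of Λ̂, we have |F(ρ,σ) - F̂| = |Tr[sqrt(Λ)] - Tr[sqrt(Λ̂₊)]| ≤ sqrt(2)·r·sqrt(‖Λ - Λ̂‖₁). -/

import Mathlib

open Matrix ComplexOrder

attribute [local instance] Classical.propDecidable

/-- Square root of a positive semidefinite matrix (junk value `0` otherwise). -/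
noncomputable def psqrt {d : ℕ} (X : Matrix (Fin d) (Fin d) ℂ) : Matrix (Fin d) (Fin d) ℂ :=
  if h : X.PosSemidef then
    (h.1.eigenvectorUnitary : Matrix (Fin d) (Fin d) ℂ) *
      diagonal (((↑) : ℝ → ℂ) ∘ (fun x => Real.sqrt x) ∘ h.1.eigenvalues) *
      (star h.1.eigenvectorUnitary : Matrix (Fin d) (Fin d) ℂ) else 0

/-- Schatten 1-norm (trace norm): `‖M‖₁ = Tr √(Mᴴ M)`. -/
noncomputable def traceNorm {d : ℕ} (M : Matrix (Fin d) (Fin d) ℂ) : ℝ :=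
  (psqrt (Mᴴ * M)).trace.re

/-- Fidelity `F(X, σ) = Tr √(√σ X √σ)` of positive semidefinite matrices. -/
noncomputable def fid {d : ℕ} (X σ : Matrix (Fin d) (Fin d) ℂ) : ℝ :=
  (psqrt (psqrt σ * X * psqrt σ)).trace.re

section CfcTools

variable {d : ℕ} {A : Matrix (Fin d) (Fin d) ℂ}

lemma diag_sub_diag (v w : Fin d → ℂ) :
    diagonal v - diagonal w = diagonal (fun i => v i - w i) := by
  ext i j; by_cases h : i = j <;> simp [h]

lemma diag_add_diag (v w : Fin d → ℂ) :
    diagonal v + diagonal w = diagonal (fun i => v i + w i) := by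
  ext i j; by_cases h : i = j <;> simp [h]

lemma my_star_mul_self (hA : A.IsHermitian) :
    (star (hA.eigenvectorUnitary : Matrix (Fin d) (Fin d) ℂ)) * hA.eigenvectorUnitary = 1 :=
  (Matrix.mem_unitaryGroup_iff').mp (hA.eigenvectorUnitary).2

lemma my_mul_star_self (hA : A.IsHermitian) :
    (hA.eigenvectorUnitary : Matrix (Fin d) (Fin d) ℂ)
      * star (hA.eigenvectorUnitary : Matrix (Fin d) (Fin d) ℂ) = 1 :=
  (Matrix.mem_unitaryGroup_iff).mp (hA.eigenvectorUnitary).2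

lemma my_cfc_def (hA : A.IsHermitian) (f : ℝ → ℝ) :
    hA.cfc f = (hA.eigenvectorUnitary : Matrix (Fin d) (Fin d) ℂ)
      * diagonal (RCLike.ofReal ∘ f ∘ hA.eigenvalues)
      * star (hA.eigenvectorUnitary : Matrix (Fin d) (Fin d) ℂ) := rfl

lemma my_cfc_mul (hA : A.IsHermitian) (f g : ℝ → ℝ) :
    hA.cfc f * hA.cfc g = hA.cfc (fun x => f x * g x) := by
  rw [my_cfc_def, my_cfc_def, my_cfc_def]
  set U : Matrix (Fin d) (Fin d) ℂ := (hA.eigenvectorUnitary : Matrix (Fin d) (Fin d) ℂ) with hU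
  have h1 : star U * U = 1 := my_star_mul_self hA
  have : U * diagonal (RCLike.ofReal ∘ f ∘ hA.eigenvalues) * star U
        * (U * diagonal (RCLike.ofReal ∘ g ∘ hA.eigenvalues) * star U)
      = U * (diagonal (RCLike.ofReal ∘ f ∘ hA.eigenvalues) * (star U * U)
          * diagonal (RCLike.ofReal ∘ g ∘ hA.eigenvalues)) * star U := by
    simp only [Matrix.mul_assoc]
  rw [this, h1, Matrix.mul_one, Matrix.diagonal_mul_diagonal]
  congr 2
  ext i j
  by_cases h : i = j <;> simp [Matrix.diagonal_apply, h]

lemma my_cfc_sub (hA : A.IsHermitian) (f g : ℝ → ℝ) :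
    hA.cfc f - hA.cfc g = hA.cfc (fun x => f x - g x) := by
  rw [my_cfc_def, my_cfc_def, my_cfc_def,
    ← Matrix.sub_mul, ← Matrix.mul_sub, diag_sub_diag]
  congr 2
  ext i j
  by_cases h : i = j <;> simp [Matrix.diagonal_apply, h]

lemma my_cfc_add (hA : A.IsHermitian) (f g : ℝ → ℝ) :
    hA.cfc f + hA.cfc g = hA.cfc (fun x => f x + g x) := by
  rw [my_cfc_def, my_cfc_def, my_cfc_def,
    ← Matrix.add_mul, ← Matrix.mul_add, diag_add_diag]
  congr 2
  ext i j
  by_cases h : i = j <;> simp [Matrix.diagonal_apply, h]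

lemma my_cfc_id (hA : A.IsHermitian) : hA.cfc (fun x => x) = A := by
  conv_rhs => rw [hA.spectral_theorem]
  rfl

lemma my_cfc_one (hA : A.IsHermitian) : hA.cfc (fun _ => 1) = 1 := by
  rw [my_cfc_def]
  have : diagonal (RCLike.ofReal ∘ (fun _ : ℝ => (1:ℝ)) ∘ hA.eigenvalues)
      = (1 : Matrix (Fin d) (Fin d) ℂ) := by
    ext i j; by_cases h : i = j <;> simp [h, Matrix.diagonal_apply, Matrix.one_apply]
  rw [this, Matrix.mul_one, my_mul_star_self hA]

lemma my_cfc_congr (hA : A.IsHermitian) {f g : ℝ → ℝ}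
    (h : ∀ i, f (hA.eigenvalues i) = g (hA.eigenvalues i)) : hA.cfc f = hA.cfc g := by
  rw [my_cfc_def, my_cfc_def]
  congr 2
  ext i j
  by_cases hij : i = j <;> simp [Matrix.diagonal_apply, hij, h j]

lemma my_trace_cfc (hA : A.IsHermitian) (f : ℝ → ℝ) :
    (hA.cfc f).trace = ∑ i, (f (hA.eigenvalues i) : ℂ) := by
  rw [my_cfc_def, Matrix.trace_mul_cycle, my_star_mul_self hA, Matrix.one_mul,
    Matrix.trace_diagonal]
  simp

lemma my_cfc_isHermitian (hA : A.IsHermitian) (f : ℝ → ℝ) : (hA.cfc f).IsHermitian := by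
  rw [my_cfc_def]
  unfold Matrix.IsHermitian
  rw [Matrix.conjTranspose_mul, Matrix.conjTranspose_mul, Matrix.diagonal_conjTranspose]
  rw [← Matrix.star_eq_conjTranspose, ← Matrix.star_eq_conjTranspose, star_star, Matrix.mul_assoc]
  congr 2
  ext i j
  by_cases h : i = j <;> simp [Matrix.diagonal_apply, h, Pi.star_def]

lemma my_cfc_posSemidef (hA : A.IsHermitian) {f : ℝ → ℝ}
    (hf : ∀ i, 0 ≤ f (hA.eigenvalues i)) : (hA.cfc f).PosSemidef := by
  rw [my_cfc_def, Matrix.star_eq_conjTranspose]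
  exact Matrix.PosSemidef.mul_mul_conjTranspose_same
    (Matrix.PosSemidef.diagonal (fun i => by simpa using hf i)) _

end CfcTools

section Chunk2
variable {d : ℕ} {A : Matrix (Fin d) (Fin d) ℂ}

lemma psqrt_of_posSemidef (hX : A.PosSemidef) : psqrt A = hX.1.cfc Real.sqrt := by
  rw [psqrt, dif_pos hX]
  rfl

open scoped MatrixOrder in
lemma my_eq_sqrt_of_sq_eq {A B : Matrix (Fin d) (Fin d) ℂ} (hA : A.PosSemidef)
    (hB : B.PosSemidef) (h : A ^ 2 = B) :
    A = (hB.1.eigenvectorUnitary : Matrix (Fin d) (Fin d) ℂ) *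
      diagonal (((↑) : ℝ → ℂ) ∘ (fun x => Real.sqrt x) ∘ hB.1.eigenvalues) *
      (star hB.1.eigenvectorUnitary : Matrix (Fin d) (Fin d) ℂ) := by
  have e : (hB.1.eigenvectorUnitary : Matrix (Fin d) (Fin d) ℂ) *
      diagonal (((↑) : ℝ → ℂ) ∘ (fun x => Real.sqrt x) ∘ hB.1.eigenvalues) *
      (star hB.1.eigenvectorUnitary : Matrix (Fin d) (Fin d) ℂ) = psqrt B := by
    rw [psqrt, dif_pos hB]
  rw [e, psqrt_of_posSemidef hB, ← hB.1.cfc_eq]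
  rw [← CFC.sqrt_unique (a := B) (b := A) (by rw [← pow_two, h])
      (Matrix.nonneg_iff_posSemidef.mpr hA),
    CFC.sqrt_eq_cfc, cfc_nnreal_eq_real _ B (Matrix.nonneg_iff_posSemidef.mpr hB)]
  congr 1
  funext x
  rw [Real.sqrt]

lemma my_rank_cfc (hA : A.IsHermitian) (f : ℝ → ℝ) :
    (hA.cfc f).rank = Fintype.card {i // f (hA.eigenvalues i) ≠ 0} := by
  have hdet : IsUnit (hA.eigenvectorUnitary : Matrix (Fin d) (Fin d) ℂ).det := by
    apply isUnit_iff_exists_inv.mpr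
    exact ⟨(star (hA.eigenvectorUnitary : Matrix (Fin d) (Fin d) ℂ)).det, by
      rw [← Matrix.det_mul, my_mul_star_self hA, Matrix.det_one]⟩
  have hdet' : IsUnit (star (hA.eigenvectorUnitary : Matrix (Fin d) (Fin d) ℂ)).det := by
    apply isUnit_iff_exists_inv.mpr
    exact ⟨(hA.eigenvectorUnitary : Matrix (Fin d) (Fin d) ℂ).det, by
      rw [← Matrix.det_mul, my_star_mul_self hA, Matrix.det_one]⟩
  rw [my_cfc_def, Matrix.rank_mul_eq_left_of_isUnit_det _ _ hdet',
    Matrix.rank_mul_eq_right_of_isUnit_det _ _ hdet, Matrix.rank_diagonal]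
  apply Fintype.card_congr
  apply Equiv.subtypeEquivRight
  intro i
  simp

end Chunk2

section Chunk3
variable {d : ℕ} {A : Matrix (Fin d) (Fin d) ℂ}

lemma my_trace_re_eq (hA : A.IsHermitian) : A.trace.re = ∑ i, hA.eigenvalues i := by
  conv_lhs => rw [← my_cfc_id hA]
  rw [my_trace_cfc]
  simp

lemma psqrt_posSemidef (hX : A.PosSemidef) : (psqrt A).PosSemidef := by
  rw [psqrt_of_posSemidef hX]; exact my_cfc_posSemidef _ fun i => Real.sqrt_nonneg _

lemma psqrt_mul_self (hX : A.PosSemidef) : psqrt A * psqrt A = A := by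
  rw [psqrt_of_posSemidef hX, my_cfc_mul]
  conv_rhs => rw [← my_cfc_id hX.1]
  exact my_cfc_congr _ fun i => Real.mul_self_sqrt (hX.eigenvalues_nonneg i)

lemma trace_psqrt (hX : A.PosSemidef) :
    (psqrt A).trace.re = ∑ i, Real.sqrt (hX.1.eigenvalues i) := by
  rw [psqrt_of_posSemidef hX, my_trace_cfc]; simp

lemma rank_psqrt (hX : A.PosSemidef) : (psqrt A).rank = A.rank := by
  rw [psqrt_of_posSemidef hX, my_rank_cfc, hX.1.rank_eq_card_non_zero_eigs]
  apply Fintype.card_congr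
  apply Equiv.subtypeEquivRight
  intro i
  have h0 := hX.eigenvalues_nonneg i
  simp only [ne_eq, Real.sqrt_eq_zero']
  rw [show hX.1.eigenvalues i ≤ 0 ↔ hX.1.eigenvalues i = 0 from
    ⟨fun h => le_antisymm h h0, fun h => h.le⟩]

lemma psqrt_conjTranspose_mul_self_herm (hA : A.IsHermitian) :
    psqrt (Aᴴ * A) = hA.cfc (fun x => |x|) := by
  have habs : (hA.cfc fun x => |x|).PosSemidef := my_cfc_posSemidef _ fun i => abs_nonneg _
  have hAA : (Aᴴ * A).PosSemidef := Matrix.posSemidef_conjTranspose_mul_self A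
  have hsq : (hA.cfc fun x => |x|) ^ 2 = Aᴴ * A := by
    rw [pow_two, my_cfc_mul, my_cfc_congr hA (g := fun x => x * x) (fun i => abs_mul_abs_self _),
      ← my_cfc_mul, my_cfc_id, hA.eq]
  rw [psqrt, dif_pos hAA, ← my_eq_sqrt_of_sq_eq habs hAA hsq]

lemma traceNorm_herm (hA : A.IsHermitian) :
    traceNorm A = ∑ i, |hA.eigenvalues i| := by
  rw [traceNorm, psqrt_conjTranspose_mul_self_herm hA, my_trace_cfc]; simp

lemma traceNorm_herm_nonneg (hA : A.IsHermitian) : 0 ≤ traceNorm A := by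
  rw [traceNorm_herm hA]
  exact Finset.sum_nonneg fun i _ => abs_nonneg _

lemma trace_re_nonneg_psd (hA : A.PosSemidef) : 0 ≤ A.trace.re := by
  rw [my_trace_re_eq hA.1]
  exact Finset.sum_nonneg fun i _ => hA.eigenvalues_nonneg i

lemma trace_mul_psd_nonneg {P Q : Matrix (Fin d) (Fin d) ℂ}
    (hP : P.PosSemidef) (hQ : Q.PosSemidef) : 0 ≤ (P * Q).trace.re := by
  have h1 : (P * Q).trace = (psqrt P * Q * psqrt P).trace := by
    conv_lhs => rw [← psqrt_mul_self hP]
    rw [Matrix.mul_assoc, Matrix.trace_mul_comm]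
  rw [h1]
  refine trace_re_nonneg_psd ?_
  have := Matrix.PosSemidef.mul_mul_conjTranspose_same hQ (psqrt P)
  rwa [(psqrt_posSemidef hP).1.eq] at this

end Chunk3

section Chunk4
variable {d : ℕ}

lemma trace_mul_diag (M : Matrix (Fin d) (Fin d) ℂ) (v : Fin d → ℂ) :
    (M * diagonal v).trace = ∑ i, M i i * v i := by
  simp [Matrix.trace, Matrix.diag, Matrix.mul_diagonal]

lemma my_key {C X : Matrix (Fin d) (Fin d) ℂ} (hC : C.IsHermitian) (hX : X.IsHermitian)
    {g : ℝ → ℝ} (hg : ∀ x, |g x| ≤ 1) :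
    ((hC.cfc g) * X).trace.re ≤ traceNorm X := by
  set U : Matrix (Fin d) (Fin d) ℂ := (hC.eigenvectorUnitary : Matrix (Fin d) (Fin d) ℂ) with hUdef
  set V : Matrix (Fin d) (Fin d) ℂ := (hX.eigenvectorUnitary : Matrix (Fin d) (Fin d) ℂ) with hVdef
  set T : Matrix (Fin d) (Fin d) ℂ := star U * V with hTdef
  set Dg : Matrix (Fin d) (Fin d) ℂ := diagonal (RCLike.ofReal ∘ g ∘ hC.eigenvalues) with hDgdef
  have hT : star T * T = 1 := by
    rw [hTdef, StarMul.star_mul, star_star, Matrix.mul_assoc, ← Matrix.mul_assoc U,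
      my_mul_star_self hC, Matrix.one_mul, my_star_mul_self hX]
  have hT1 : ∀ i, ∑ j, Complex.normSq (T j i) = 1 := by
    intro i
    have h := congrFun (congrFun hT i) i
    simp only [Matrix.mul_apply, Matrix.one_apply_eq, Matrix.star_apply] at h
    have h2 : ∀ j, (star (T j i)) * T j i = (Complex.normSq (T j i) : ℂ) := by
      intro j
      rw [Complex.star_def, Complex.normSq_eq_conj_mul_self]
    rw [Finset.sum_congr rfl (fun j _ => h2 j)] at h
    have := congrArg Complex.re h
    simpa using this
  -- trace formula
  have htr : ((hC.cfc g) * X).trace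
      = ∑ i, (∑ j, ((g (hC.eigenvalues j) * Complex.normSq (T j i) : ℝ) : ℂ))
          * (hX.eigenvalues i : ℂ) := by
    have hXeq : X = V * diagonal (RCLike.ofReal ∘ hX.eigenvalues) * star V := hX.spectral_theorem
    have hstep : (hC.cfc g) * X
        = (U * Dg * star U * V * diagonal (RCLike.ofReal ∘ hX.eigenvalues)) * star V := by
      rw [my_cfc_def, ← hDgdef, ← hUdef]
      conv_lhs => rw [hXeq]
      simp only [Matrix.mul_assoc]
    rw [hstep, Matrix.trace_mul_comm]
    have hstep2 : star V * (U * Dg * star U * V * diagonal (RCLike.ofReal ∘ hX.eigenvalues))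
        = (star T * Dg * T) * diagonal (RCLike.ofReal ∘ hX.eigenvalues) := by
      rw [hTdef, StarMul.star_mul, star_star]
      simp only [Matrix.mul_assoc]
    rw [hstep2, trace_mul_diag]
    refine Finset.sum_congr rfl fun i _ => ?_
    congr 1
    · rw [Matrix.mul_apply]
      refine Finset.sum_congr rfl fun j _ => ?_
      rw [Matrix.mul_diagonal, Matrix.star_apply]
      have : (star (T j i)) * T j i = (Complex.normSq (T j i) : ℂ) := by
        rw [Complex.star_def, Complex.normSq_eq_conj_mul_self]
      push_cast
      calc star (T j i) * ((g (hC.eigenvalues j) : ℂ)) * T j i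
          = (g (hC.eigenvalues j) : ℂ) * (star (T j i) * T j i) := by ring
        _ = (g (hC.eigenvalues j) : ℂ) * (Complex.normSq (T j i) : ℂ) := by rw [this]
  have htr_re : ((hC.cfc g) * X).trace.re
      = ∑ i, (∑ j, g (hC.eigenvalues j) * Complex.normSq (T j i)) * hX.eigenvalues i := by
    rw [htr]
    push_cast
    simp
  rw [htr_re, traceNorm_herm hX]
  refine Finset.sum_le_sum fun i _ => ?_
  have hw : |∑ j, g (hC.eigenvalues j) * Complex.normSq (T j i)| ≤ 1 := by
    calc |∑ j, g (hC.eigenvalues j) * Complex.normSq (T j i)|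
        ≤ ∑ j, |g (hC.eigenvalues j) * Complex.normSq (T j i)| := Finset.abs_sum_le_sum_abs _ _
      _ ≤ ∑ j, Complex.normSq (T j i) := by
          refine Finset.sum_le_sum fun j _ => ?_
          rw [abs_mul, abs_of_nonneg (Complex.normSq_nonneg _)]
          exact mul_le_of_le_one_left (Complex.normSq_nonneg _) (hg _)
      _ = 1 := hT1 i
  calc (∑ j, g (hC.eigenvalues j) * Complex.normSq (T j i)) * hX.eigenvalues i
      ≤ |(∑ j, g (hC.eigenvalues j) * Complex.normSq (T j i)) * hX.eigenvalues i| := le_abs_self _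
    _ = |∑ j, g (hC.eigenvalues j) * Complex.normSq (T j i)| * |hX.eigenvalues i| := abs_mul _ _
    _ ≤ 1 * |hX.eigenvalues i| := by
        exact mul_le_mul_of_nonneg_right hw (abs_nonneg _)
    _ = |hX.eigenvalues i| := one_mul _

end Chunk4

section Chunk5
variable {d : ℕ}

lemma powers_stormer {X Y : Matrix (Fin d) (Fin d) ℂ} (hX : X.PosSemidef) (hY : Y.PosSemidef) :
    ((psqrt X - psqrt Y) * (psqrt X - psqrt Y)).trace.re ≤ traceNorm (X - Y) := by
  set A := psqrt X with hAdef
  set B := psqrt Y with hBdef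
  clear_value A B
  have hA : A.PosSemidef := hAdef ▸ psqrt_posSemidef hX
  have hB : B.PosSemidef := hBdef ▸ psqrt_posSemidef hY
  have hC : (A - B).IsHermitian := hA.1.sub hB.1
  set C := A - B with hCdef
  clear_value C
  have hXY : (X - Y).IsHermitian := hX.1.sub hY.1
  set Cp := hC.cfc (fun x => max x 0) with hCp
  set Cn := hC.cfc (fun x => max (-x) 0) with hCn
  set S := hC.cfc (fun x => if x < 0 then (-1:ℝ) else 1) with hS
  have hCpC : Cp - Cn = C := by
    rw [hCp, hCn, my_cfc_sub,
      my_cfc_congr hC (g := fun x => x) (fun i => max_zero_sub_max_neg_zero_eq_self _),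
      my_cfc_id]
  have hCabs : Cp + Cn = hC.cfc (fun x => |x|) := by
    rw [hCp, hCn, my_cfc_add]
    exact my_cfc_congr hC fun i => max_zero_add_max_neg_zero_eq_abs_self _
  have hSC : S * C = hC.cfc (fun x => |x|) := by
    have h := my_cfc_mul hC (fun x => if x < 0 then (-1:ℝ) else 1) (fun x => x)
    rw [my_cfc_id hC] at h
    rw [hS, h]
    exact my_cfc_congr hC fun i => by
      rcases lt_or_ge (hC.eigenvalues i) 0 with h | h
      · simp [if_pos h, abs_of_neg h]
      · simp [if_neg (not_lt.mpr h), abs_of_nonneg h]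
  have hCS : C * S = hC.cfc (fun x => |x|) := by
    have h := my_cfc_mul hC (fun x => x) (fun x => if x < 0 then (-1:ℝ) else 1)
    rw [my_cfc_id hC] at h
    rw [hS, h]
    exact my_cfc_congr hC fun i => by
      rcases lt_or_ge (hC.eigenvalues i) 0 with h | h
      · simp [if_pos h, abs_of_neg h, mul_comm]
      · simp [if_neg (not_lt.mpr h), abs_of_nonneg h]
  have hCpPSD : Cp.PosSemidef := my_cfc_posSemidef hC fun i => le_max_right _ _
  have hCnPSD : Cn.PosSemidef := my_cfc_posSemidef hC fun i => le_max_right _ _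
  have h2B : (0:ℝ) ≤ (Cp * (B + B)).trace.re := trace_mul_psd_nonneg hCpPSD (hB.add hB)
  have h2A : (0:ℝ) ≤ (Cn * (A + A)).trace.re := trace_mul_psd_nonneg hCnPSD (hA.add hA)
  have eB : B + B = (A + B) - C := by rw [hCdef]; abel
  have eA : A + A = (A + B) + C := by rw [hCdef]; abel
  have i1 : (Cp * C).trace.re ≤ (Cp * (A + B)).trace.re := by
    have h : Cp * ((A+B) - C) = Cp * (A+B) - Cp * C := by rw [Matrix.mul_sub]
    rw [eB, h, Matrix.trace_sub] at h2B
    simp only [Complex.sub_re] at h2B; linarith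
  have i2 : -(Cn * C).trace.re ≤ (Cn * (A + B)).trace.re := by
    have h : Cn * ((A+B) + C) = Cn * (A+B) + Cn * C := by rw [Matrix.mul_add]
    rw [eA, h, Matrix.trace_add] at h2A
    simp only [Complex.add_re] at h2A; linarith
  have iC : (C * C).trace.re ≤ ((Cp + Cn) * (A + B)).trace.re := by
    have e : C * C = Cp * C - Cn * C := by rw [← hCpC, Matrix.sub_mul]
    have e2 : (Cp + Cn) * (A+B) = Cp * (A+B) + Cn * (A+B) := Matrix.add_mul _ _ _
    rw [e, Matrix.trace_sub, e2, Matrix.trace_add]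
    simp only [Complex.sub_re, Complex.add_re]
    linarith
  have hmid : C * (A + B) + (A + B) * C = (X - Y) + (X - Y) := by
    have hA2 : A * A = X := by rw [hAdef]; exact psqrt_mul_self hX
    have hB2 : B * B = Y := by rw [hBdef]; exact psqrt_mul_self hY
    rw [hCdef, ← hA2, ← hB2]
    noncomm_ring
  have e1 : (S * (X - Y)).trace + (S * (X - Y)).trace
      = ((Cp+Cn)*(A+B)).trace + ((Cp+Cn)*(A+B)).trace := by
    calc (S * (X - Y)).trace + (S * (X - Y)).trace
        = (S * ((X - Y) + (X - Y))).trace := by rw [Matrix.mul_add, Matrix.trace_add]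
      _ = (S * (C * (A+B))).trace + (S * ((A+B) * C)).trace := by
          rw [← hmid, Matrix.mul_add, Matrix.trace_add]
      _ = ((S * C) * (A+B)).trace + ((C * S) * (A+B)).trace := by
          have t1 : (S * (C * (A+B))).trace = ((S * C) * (A+B)).trace := by
            rw [Matrix.mul_assoc]
          have t2 : (S * ((A+B) * C)).trace = ((C * S) * (A+B)).trace := by
            rw [← Matrix.mul_assoc, Matrix.trace_mul_comm, ← Matrix.mul_assoc]
          rw [t1, t2]
      _ = ((Cp+Cn)*(A+B)).trace + ((Cp+Cn)*(A+B)).trace := by rw [hSC, hCS, hCabs]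
  have habsD_re : ((Cp + Cn) * (A + B)).trace.re = (S * (X - Y)).trace.re := by
    have := congrArg Complex.re e1
    simp only [Complex.add_re] at this
    linarith
  have hkey : (S * (X - Y)).trace.re ≤ traceNorm (X - Y) := by
    refine my_key hC hXY fun x => ?_
    split_ifs <;> simp
  calc (C * C).trace.re ≤ ((Cp + Cn) * (A + B)).trace.re := iC
    _ = (S * (X - Y)).trace.re := habsD_re
    _ ≤ traceNorm (X - Y) := hkey

end Chunk5

section Chunk6
variable {d : ℕ}

lemma sgn_abs_le : ∀ x : ℝ, |if x < 0 then (-1:ℝ) else 1| ≤ 1 := fun x => by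
  split_ifs <;> simp

lemma traceNorm_cfc {L : Matrix (Fin d) (Fin d) ℂ} (hL : L.IsHermitian) (f : ℝ → ℝ) :
    traceNorm (hL.cfc f) = ∑ i, |f (hL.eigenvalues i)| := by
  have hHerm := my_cfc_isHermitian hL f
  have hM2 : (hL.cfc f)ᴴ * (hL.cfc f) = hL.cfc (fun x => f x * f x) := by
    rw [hHerm.eq, my_cfc_mul]
  have hPSD2 : ((hL.cfc f)ᴴ * (hL.cfc f)).PosSemidef :=
    Matrix.posSemidef_conjTranspose_mul_self _
  have habs : (hL.cfc (fun x => |f x|)).PosSemidef :=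
    my_cfc_posSemidef hL fun i => abs_nonneg _
  have hsq : (hL.cfc fun x => |f x|) ^ 2 = (hL.cfc f)ᴴ * (hL.cfc f) := by
    rw [pow_two, my_cfc_mul, hM2]
    exact my_cfc_congr hL fun i => abs_mul_abs_self _
  rw [traceNorm, psqrt, dif_pos hPSD2, ← my_eq_sqrt_of_sq_eq habs hPSD2 hsq,
    my_trace_cfc]
  simp

lemma traceNorm_triangle_herm {X Y : Matrix (Fin d) (Fin d) ℂ}
    (hX : X.IsHermitian) (hY : Y.IsHermitian) :
    traceNorm (X + Y) ≤ traceNorm X + traceNorm Y := by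
  have hXY : (X + Y).IsHermitian := hX.add hY
  set S := hXY.cfc (fun x => if x < 0 then (-1:ℝ) else 1) with hS
  have habs : (S * (X + Y)).trace.re = traceNorm (X + Y) := by
    have h := my_cfc_mul hXY (fun x => if x < 0 then (-1:ℝ) else 1) (fun x => x)
    rw [my_cfc_id hXY] at h
    rw [hS, h, my_trace_cfc, traceNorm_herm hXY]
    simp only [Complex.re_sum, Complex.ofReal_re]
    refine Finset.sum_congr rfl fun i _ => ?_
    rcases lt_or_ge (hXY.eigenvalues i) 0 with hlt | hge
    · simp [if_pos hlt, abs_of_neg hlt]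
    · simp [if_neg (not_lt.mpr hge), abs_of_nonneg hge]
  have hsplit : (S * (X + Y)).trace = (S * X).trace + (S * Y).trace := by
    rw [Matrix.mul_add, Matrix.trace_add]
  have h1 : (S * X).trace.re ≤ traceNorm X := my_key hXY hX sgn_abs_le
  have h2 : (S * Y).trace.re ≤ traceNorm Y := my_key hXY hY sgn_abs_le
  have h3 := congrArg Complex.re hsplit
  simp only [Complex.add_re] at h3
  linarith [habs.symm.trans_le (le_of_eq rfl)]

lemma traceNorm_negpart_le {W L : Matrix (Fin d) (Fin d) ℂ} (hW : W.PosSemidef)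
    (hL : L.IsHermitian) :
    traceNorm (L - hL.cfc (fun x => max x 0)) ≤ traceNorm (W - L) := by
  have hsub : L - hL.cfc (fun x => max x 0) = hL.cfc (fun x => min x 0) := by
    have h := my_cfc_sub hL (fun x => x) (fun x => max x 0)
    rw [my_cfc_id hL] at h
    rw [h]
    refine my_cfc_congr hL fun i => ?_
    rcases le_total (hL.eigenvalues i) 0 with h0 | h0
    · rw [max_eq_right h0, min_eq_left h0, sub_zero]
    · rw [max_eq_left h0, min_eq_right h0, sub_self]
  set Q := hL.cfc (fun x => if x < 0 then (1:ℝ) else 0) with hQ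
  have hQL : (Q * L).trace.re = ∑ i, min (hL.eigenvalues i) 0 := by
    have h := my_cfc_mul hL (fun x => if x < 0 then (1:ℝ) else 0) (fun x => x)
    rw [my_cfc_id hL] at h
    rw [hQ, h, my_trace_cfc]
    simp only [Complex.re_sum, Complex.ofReal_re]
    refine Finset.sum_congr rfl fun i _ => ?_
    rcases lt_or_ge (hL.eigenvalues i) 0 with hlt | hge
    · rw [if_pos hlt, one_mul, min_eq_left hlt.le]
    · rw [if_neg (not_lt.mpr hge), zero_mul, min_eq_right hge]
  have hTN : traceNorm (L - hL.cfc (fun x => max x 0)) = -(Q * L).trace.re := by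
    rw [hsub, traceNorm_cfc, hQL, ← Finset.sum_neg_distrib]
    refine Finset.sum_congr rfl fun i _ => ?_
    rw [abs_of_nonpos (min_le_right _ _)]
  have hQPSD : Q.PosSemidef := my_cfc_posSemidef hL fun i => by split_ifs <;> norm_num
  have hQW : 0 ≤ (Q * W).trace.re := trace_mul_psd_nonneg hQPSD hW
  have hWL : (W - L).IsHermitian := hW.1.sub hL
  have hkey : (Q * (W - L)).trace.re ≤ traceNorm (W - L) := by
    refine my_key hL hWL fun x => ?_
    split_ifs <;> simp
  have hsplit : (Q * (W - L)).trace = (Q * W).trace - (Q * L).trace := by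
    rw [Matrix.mul_sub, Matrix.trace_sub]
  have h3 := congrArg Complex.re hsplit
  simp only [Complex.sub_re] at h3
  linarith

lemma abs_trace_re_le_traceNorm {X : Matrix (Fin d) (Fin d) ℂ} (hX : X.IsHermitian) :
    |X.trace.re| ≤ traceNorm X := by
  rw [my_trace_re_eq hX, traceNorm_herm hX]
  exact Finset.abs_sum_le_sum_abs _ _

lemma cauchy_schwarz_trace {C : Matrix (Fin d) (Fin d) ℂ} (hC : C.IsHermitian) :
    |C.trace.re| ≤ Real.sqrt C.rank * Real.sqrt ((C * C).trace.re) := by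
  have htr : C.trace.re = ∑ i, hC.eigenvalues i := my_trace_re_eq hC
  have htr2 : (C * C).trace.re = ∑ i, hC.eigenvalues i ^ 2 := by
    have h : C * C = hC.cfc (fun x => x * x) := by
      conv_lhs => rw [← my_cfc_id hC]
      rw [my_cfc_mul]
    rw [h, my_trace_cfc]
    simp only [Complex.re_sum, Complex.ofReal_re]
    exact Finset.sum_congr rfl fun i _ => (sq (hC.eigenvalues i)).symm ▸ by ring
  set s := Finset.univ.filter (fun i => hC.eigenvalues i ≠ 0) with hs
  have hrank : (C.rank : ℝ) = (s.card : ℝ) := by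
    rw [hC.rank_eq_card_non_zero_eigs, Fintype.card_subtype]
  have hsum_eq : ∑ i, hC.eigenvalues i = ∑ i ∈ s, hC.eigenvalues i := by
    rw [hs, Finset.sum_filter_ne_zero]
  have hcs : (∑ i ∈ s, hC.eigenvalues i) ^ 2 ≤ s.card * ∑ i ∈ s, hC.eigenvalues i ^ 2 :=
    sq_sum_le_card_mul_sum_sq
  have hsub : ∑ i ∈ s, hC.eigenvalues i ^ 2 ≤ ∑ i, hC.eigenvalues i ^ 2 :=
    Finset.sum_le_sum_of_subset_of_nonneg s.subset_univ (fun i _ _ => sq_nonneg _)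
  have h2nn : 0 ≤ ∑ i, hC.eigenvalues i ^ 2 := Finset.sum_nonneg fun i _ => sq_nonneg _
  rw [htr, htr2, hsum_eq]
  calc |∑ i ∈ s, hC.eigenvalues i|
      = Real.sqrt ((∑ i ∈ s, hC.eigenvalues i) ^ 2) := (Real.sqrt_sq_eq_abs _).symm
    _ ≤ Real.sqrt (s.card * ∑ i, hC.eigenvalues i ^ 2) := by
        refine Real.sqrt_le_sqrt ?_
        calc (∑ i ∈ s, hC.eigenvalues i) ^ 2
            ≤ s.card * ∑ i ∈ s, hC.eigenvalues i ^ 2 := hcs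
          _ ≤ s.card * ∑ i, hC.eigenvalues i ^ 2 := by
              exact mul_le_mul_of_nonneg_left hsub (Nat.cast_nonneg _)
    _ = Real.sqrt s.card * Real.sqrt (∑ i, hC.eigenvalues i ^ 2) :=
        Real.sqrt_mul (Nat.cast_nonneg _) _
    _ = Real.sqrt C.rank * Real.sqrt (∑ i, hC.eigenvalues i ^ 2) := by rw [hrank]

lemma my_rank_sub_le (M N : Matrix (Fin d) (Fin d) ℂ) : (M - N).rank ≤ M.rank + N.rank := by
  have hr : LinearMap.range (M - N).mulVecLin
      ≤ LinearMap.range M.mulVecLin ⊔ LinearMap.range N.mulVecLin := by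
    rintro x ⟨v, rfl⟩
    rw [Matrix.mulVecLin_apply, Matrix.sub_mulVec, sub_eq_add_neg]
    exact Submodule.add_mem_sup ⟨v, rfl⟩ (Submodule.neg_mem _ ⟨v, rfl⟩)
  calc (M - N).rank ≤ Module.finrank ℂ
        ↥(LinearMap.range M.mulVecLin ⊔ LinearMap.range N.mulVecLin) :=
        Submodule.finrank_mono hr
    _ ≤ M.rank + N.rank := Submodule.finrank_add_le_finrank_add_finrank _ _

lemma sqrt_sub_sqrt_le (a b : ℝ) (ha : 0 ≤ a) (hb : 0 ≤ b) :
    |Real.sqrt a - Real.sqrt b| ≤ Real.sqrt |a - b| := by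
  wlog h : b ≤ a generalizing a b
  · rw [abs_sub_comm, abs_sub_comm a b]; exact this b a hb ha (le_of_not_ge h)
  rw [abs_of_nonneg (sub_nonneg.mpr (Real.sqrt_le_sqrt h)), abs_of_nonneg (sub_nonneg.mpr h),
    sub_le_iff_le_add]
  have hkey : Real.sqrt a ≤ Real.sqrt (a - b) + Real.sqrt b := by
    have hsq : a ≤ (Real.sqrt (a - b) + Real.sqrt b) ^ 2 := by
      have e : (Real.sqrt (a - b) + Real.sqrt b) ^ 2
          = (a - b) + b + 2 * Real.sqrt (a - b) * Real.sqrt b := by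
        rw [add_sq, Real.sq_sqrt (sub_nonneg.mpr h), Real.sq_sqrt hb]; ring
      rw [e]
      have := mul_nonneg (mul_nonneg (by norm_num : (0:ℝ) ≤ 2) (Real.sqrt_nonneg (a-b)))
        (Real.sqrt_nonneg b)
      linarith
    calc Real.sqrt a ≤ Real.sqrt ((Real.sqrt (a - b) + Real.sqrt b) ^ 2) := Real.sqrt_le_sqrt hsq
      _ = |Real.sqrt (a - b) + Real.sqrt b| := Real.sqrt_sq_eq_abs _
      _ = Real.sqrt (a - b) + Real.sqrt b := abs_of_nonneg
          (add_nonneg (Real.sqrt_nonneg _) (Real.sqrt_nonneg _))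
  linarith

lemma sum_sqrt_of_card_le_one {w : Fin d → ℝ} (h0 : ∀ i, 0 ≤ w i)
    (h1 : (Finset.univ.filter (fun i => w i ≠ 0)).card ≤ 1) :
    ∑ i, Real.sqrt (w i) = Real.sqrt (∑ i, w i) := by
  set s := Finset.univ.filter (fun i => w i ≠ 0) with hs
  have hmem : ∀ i ∉ s, w i = 0 := by
    intro i hi
    by_contra hne
    exact hi (by simp [hs, hne])
  have e1 : ∑ i, Real.sqrt (w i) = ∑ i ∈ s, Real.sqrt (w i) :=
    (Finset.sum_subset s.subset_univ fun i _ hi => by rw [hmem i hi, Real.sqrt_zero]).symm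
  have e2 : ∑ i, w i = ∑ i ∈ s, w i :=
    (Finset.sum_subset s.subset_univ fun i _ hi => hmem i hi).symm
  rw [e1, e2]
  rcases s.eq_empty_or_nonempty with he | ⟨i₀, hi₀⟩
  · rw [he]; simp
  · have hsingle : s = {i₀} := by
      apply Finset.eq_singleton_iff_unique_mem.mpr
      exact ⟨hi₀, fun j hj => Finset.card_le_one.mp h1 j hj i₀ hi₀⟩
    rw [hsingle]; simp

end Chunk6

section Chunk7
variable {d : ℕ} {A : Matrix (Fin d) (Fin d) ℂ}

lemma my_cfc_zero (hA : A.IsHermitian) : hA.cfc (fun _ => 0) = 0 := by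
  rw [my_cfc_def]
  have : diagonal (RCLike.ofReal ∘ (fun _ : ℝ => (0:ℝ)) ∘ hA.eigenvalues)
      = (0 : Matrix (Fin d) (Fin d) ℂ) := by
    ext i j; by_cases h : i = j <;> simp [h, Matrix.diagonal_apply]
  rw [this, Matrix.mul_zero, Matrix.zero_mul]

lemma trace_psqrt_mul_conjTranspose (M : Matrix (Fin d) (Fin d) ℂ) :
    (psqrt (M * Mᴴ)).trace.re = (psqrt (Mᴴ * M)).trace.re := by
  have hN : (Mᴴ * M).PosSemidef := Matrix.posSemidef_conjTranspose_mul_self M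
  have hNN : (M * Mᴴ).PosSemidef := Matrix.posSemidef_self_mul_conjTranspose M
  set g : ℝ → ℝ := fun x => if 0 < x then (Real.sqrt x)⁻¹ else 0 with hg
  set G := hN.1.cfc g with hG
  set K := hN.1.cfc (fun x => if 0 < x then 0 else 1) with hK0
  have hGPSD : G.PosSemidef := my_cfc_posSemidef _ fun i => by
    by_cases h : 0 < hN.1.eigenvalues i
    · simp only [hg, if_pos h]; positivity
    · simp only [hg, if_neg h]
      exact le_refl 0
  have hKH : K.IsHermitian := my_cfc_isHermitian _ _
  have hB_PSD : (M * G * Mᴴ).PosSemidef := Matrix.PosSemidef.mul_mul_conjTranspose_same hGPSD M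
  have hNK : (Mᴴ * M) * K = 0 := by
    have h := my_cfc_mul hN.1 (fun x => x) (fun x => if 0 < x then 0 else 1)
    rw [my_cfc_id] at h
    rw [hK0, h]
    have h2 : hN.1.cfc (fun x => x * (if 0 < x then 0 else 1)) = hN.1.cfc (fun _ => 0) := by
      refine my_cfc_congr _ fun i => ?_
      rcases (hN.eigenvalues_nonneg i).lt_or_eq with hlt | heq
      · rw [if_pos hlt, mul_zero]
      · rw [← heq, zero_mul]
    rw [h2, my_cfc_zero]
  have hMK : M * K = 0 := by
    have h1 : (M * K)ᴴ * (M * K) = K * ((Mᴴ * M) * K) := by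
      rw [Matrix.conjTranspose_mul, hKH.eq]
      simp only [Matrix.mul_assoc]
    rw [hNK, Matrix.mul_zero] at h1
    exact Matrix.conjTranspose_mul_self_eq_zero.mp h1
  have hGNG : G * (Mᴴ * M) * G = hN.1.cfc (fun x => if 0 < x then 1 else 0) := by
    have h1 := my_cfc_mul hN.1 g (fun x => x)
    rw [my_cfc_id] at h1
    have h2 := my_cfc_mul hN.1 (fun x => g x * x) g
    rw [hG, h1, h2]
    refine my_cfc_congr _ fun i => ?_
    rcases (hN.eigenvalues_nonneg i).lt_or_eq with hlt | heq
    · rw [hg]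
      simp only [if_pos hlt]
      have hs : Real.sqrt (hN.1.eigenvalues i) ≠ 0 :=
        ne_of_gt (Real.sqrt_pos.mpr hlt)
      field_simp
      rw [Real.sq_sqrt hlt.le]
    · rw [hg]
      simp [← heq]
  have hone : hN.1.cfc (fun x => if 0 < x then 1 else 0) = 1 - K := by
    have h := my_cfc_add hN.1 (fun x => if 0 < x then (1:ℝ) else 0) (fun x => if 0 < x then 0 else 1)
    have h2 : hN.1.cfc (fun x => (if 0 < x then (1:ℝ) else 0) + (if 0 < x then 0 else 1))
        = hN.1.cfc (fun _ => 1) := my_cfc_congr _ fun i => by split_ifs <;> norm_num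
    rw [h2, my_cfc_one] at h
    rw [← hK0] at h
    exact eq_sub_of_add_eq h
  have hsq : (M * G * Mᴴ) * (M * G * Mᴴ) = M * Mᴴ := by
    have e1 : (M * G * Mᴴ) * (M * G * Mᴴ) = M * (G * (Mᴴ * M) * G) * Mᴴ := by
      simp only [Matrix.mul_assoc]
    rw [e1, hGNG, hone, Matrix.mul_sub, Matrix.mul_one, Matrix.sub_mul, hMK, Matrix.zero_mul,
      sub_zero]
  have hBeq : psqrt (M * Mᴴ) = M * G * Mᴴ := by
    rw [psqrt, dif_pos hNN]
    exact (my_eq_sqrt_of_sq_eq hB_PSD hNN (by rw [pow_two]; exact hsq)).symm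
  rw [hBeq]
  have ht : (M * G * Mᴴ).trace = (G * (Mᴴ * M)).trace := by
    have t1 : (M * G * Mᴴ).trace = (Mᴴ * (M * G)).trace := Matrix.trace_mul_comm (M * G) Mᴴ
    have t2 : Mᴴ * (M * G) = (Mᴴ * M) * G := by rw [Matrix.mul_assoc]
    rw [t1, t2, Matrix.trace_mul_comm]
  have hGN : G * (Mᴴ * M) = hN.1.cfc (fun x => g x * x) := by
    have h := my_cfc_mul hN.1 g (fun x => x)
    rw [my_cfc_id] at h
    rw [hG, h]
  rw [ht, hGN, my_trace_cfc, trace_psqrt hN]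
  simp only [Complex.re_sum, Complex.ofReal_re]
  refine Finset.sum_congr rfl fun i _ => ?_
  rcases (hN.eigenvalues_nonneg i).lt_or_eq with hlt | heq
  · rw [hg]
    simp only [if_pos hlt]
    rw [inv_mul_eq_div, eq_comm, eq_div_iff (ne_of_gt (Real.sqrt_pos.mpr hlt)),
      Real.mul_self_sqrt hlt.le]
  · rw [hg, ← heq]
    simp

lemma fid_symm {ρ σ : Matrix (Fin d) (Fin d) ℂ} (hρ : ρ.PosSemidef) (hσ : σ.PosSemidef) :
    fid ρ σ = (psqrt (psqrt ρ * σ * psqrt ρ)).trace.re := by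
  set M := psqrt σ * psqrt ρ with hM
  have hMH : Mᴴ = psqrt ρ * psqrt σ := by
    rw [hM, Matrix.conjTranspose_mul, (psqrt_posSemidef hρ).1.eq, (psqrt_posSemidef hσ).1.eq]
  have h1 : psqrt σ * ρ * psqrt σ = M * Mᴴ := by
    rw [hM, hMH,
      show psqrt σ * psqrt ρ * (psqrt ρ * psqrt σ)
        = psqrt σ * (psqrt ρ * psqrt ρ) * psqrt σ by simp only [Matrix.mul_assoc],
      psqrt_mul_self hρ]
  have h2 : psqrt ρ * σ * psqrt ρ = Mᴴ * M := by
    rw [hM, hMH,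
      show psqrt ρ * psqrt σ * (psqrt σ * psqrt ρ)
        = psqrt ρ * (psqrt σ * psqrt σ) * psqrt ρ by simp only [Matrix.mul_assoc],
      psqrt_mul_self hσ]
  rw [fid, h1, h2]
  exact trace_psqrt_mul_conjTranspose M

end Chunk7

section Final
variable {d : ℕ}

lemma rank_ne_zero_of_trace_one {X : Matrix (Fin d) (Fin d) ℂ} (hX : X.PosSemidef)
    (h1 : X.trace = 1) : X.rank ≠ 0 := by
  intro h0
  have hcard := hX.1.rank_eq_card_non_zero_eigs
  rw [h0] at hcard
  have hempty : IsEmpty {i // hX.1.eigenvalues i ≠ 0} := Fintype.card_eq_zero_iff.mp hcard.symm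
  have hall : ∀ i, hX.1.eigenvalues i = 0 := fun i => by
    by_contra hne
    exact hempty.false ⟨i, hne⟩
  have h2 : X.trace.re = 0 := by
    rw [my_trace_re_eq hX.1]
    simp [hall]
  rw [h1] at h2
  simp at h2

lemma trace_mul_self_re_nonneg {C : Matrix (Fin d) (Fin d) ℂ} (hC : C.IsHermitian) :
    0 ≤ (C * C).trace.re := by
  have h : C * C = hC.cfc (fun x => x * x) := by
    conv_lhs => rw [← my_cfc_id hC]
    rw [my_cfc_mul]
  rw [h, my_trace_cfc]
  simp only [Complex.re_sum, Complex.ofReal_re]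
  exact Finset.sum_nonneg fun i _ => mul_self_nonneg _

theorem fidelity_continuity_bound {d : ℕ} (ρ σ L : Matrix (Fin d) (Fin d) ℂ)
    (hρ : ρ.PosSemidef) (hσ : σ.PosSemidef)
    (hρ1 : ρ.trace = 1) (hσ1 : σ.trace = 1)
    (hL : L.IsHermitian)
    (hLrank : L.rank ≤ (psqrt ρ * σ * psqrt ρ).rank) :
    |fid ρ σ - (psqrt (hL.cfc (fun x => max x 0))).trace.re|
        = |(psqrt (psqrt ρ * σ * psqrt ρ)).trace.re
            - (psqrt (hL.cfc (fun x => max x 0))).trace.re| ∧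
    |fid ρ σ - (psqrt (hL.cfc (fun x => max x 0))).trace.re|
        ≤ Real.sqrt 2 * (min ρ.rank σ.rank : ℕ)
            * Real.sqrt (traceNorm (psqrt ρ * σ * psqrt ρ - L)) := by
  have hpρ := psqrt_posSemidef hρ
  have hW : (psqrt ρ * σ * psqrt ρ).PosSemidef := by
    have h := Matrix.PosSemidef.mul_mul_conjTranspose_same hσ (psqrt ρ)
    rwa [hpρ.1.eq] at h
  have hsymm : fid ρ σ = (psqrt (psqrt ρ * σ * psqrt ρ)).trace.re := fid_symm hρ hσ
  refine ⟨by rw [hsymm], ?_⟩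
  rw [hsymm]
  set W := psqrt ρ * σ * psqrt ρ with hWdef
  set P := hL.cfc (fun x => max x 0) with hPdef
  have hP : P.PosSemidef := my_cfc_posSemidef hL fun i => le_max_right _ _
  set r : ℕ := min ρ.rank σ.rank with hr
  have hWL : (W - L).IsHermitian := hW.1.sub hL
  have hLP : (L - P).IsHermitian := hL.sub (my_cfc_isHermitian hL _)
  set N1 := traceNorm (W - L) with hN1def
  have hN1 : 0 ≤ N1 := traceNorm_herm_nonneg hWL
  have htri : traceNorm (W - P) ≤ N1 + traceNorm (L - P) := by
    have e : W - P = (W - L) + (L - P) := by abel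
    rw [e]; exact traceNorm_triangle_herm hWL hLP
  have hneg : traceNorm (L - P) ≤ N1 := traceNorm_negpart_le hW hL
  have hWP2 : traceNorm (W - P) ≤ 2 * N1 := by linarith
  -- ranks
  have hrankW : W.rank ≤ r := by
    have h1 : W.rank ≤ (psqrt ρ * σ).rank := Matrix.rank_mul_le_left _ _
    have h2 : (psqrt ρ * σ).rank ≤ (psqrt ρ).rank := Matrix.rank_mul_le_left _ _
    have h3 : (psqrt ρ * σ).rank ≤ σ.rank := Matrix.rank_mul_le_right _ _
    have h4 : (psqrt ρ).rank = ρ.rank := rank_psqrt hρ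
    exact le_min (h1.trans (h2.trans_eq h4)) (h1.trans h3)
  have hrankP : P.rank ≤ W.rank := by
    refine le_trans ?_ hLrank
    rw [hPdef, my_rank_cfc hL, hL.rank_eq_card_non_zero_eigs]
    refine Fintype.card_subtype_mono _ _ fun i hi => ?_
    intro h0
    exact hi (by rw [h0]; simp)
  have hr1 : 1 ≤ r := by
    rcases Nat.eq_zero_or_pos r with h0 | h
    · exfalso
      rcases Nat.min_eq_zero_iff.mp (hr ▸ h0) with h | h
      · exact rank_ne_zero_of_trace_one hρ hρ1 h
      · exact rank_ne_zero_of_trace_one hσ hσ1 h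
    · exact h
  -- common facts
  have hApsd := psqrt_posSemidef hW
  have hBpsd := psqrt_posSemidef hP
  have hC : (psqrt W - psqrt P).IsHermitian := hApsd.1.sub hBpsd.1
  have hPS : ((psqrt W - psqrt P) * (psqrt W - psqrt P)).trace.re ≤ 2 * N1 :=
    (powers_stormer hW hP).trans hWP2
  have hdiff : (psqrt W).trace.re - (psqrt P).trace.re = (psqrt W - psqrt P).trace.re := by
    rw [Matrix.trace_sub, Complex.sub_re]
  rcases eq_or_lt_of_le hr1 with hcase | hcase
  · -- r = 1
    have hrW1 : W.rank ≤ 1 := hrankW.trans_eq hcase.symm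
    have cardW : (Finset.univ.filter (fun i => hW.1.eigenvalues i ≠ 0)).card ≤ 1 := by
      have h := hW.1.rank_eq_card_non_zero_eigs
      rw [Fintype.card_subtype] at h
      exact h ▸ hrW1
    have cardP : (Finset.univ.filter (fun i => hP.1.eigenvalues i ≠ 0)).card ≤ 1 := by
      have h := hP.1.rank_eq_card_non_zero_eigs
      rw [Fintype.card_subtype] at h
      exact h ▸ (hrankP.trans hrW1)
    have tA : (psqrt W).trace.re = Real.sqrt (W.trace.re) := by
      rw [trace_psqrt hW, my_trace_re_eq hW.1]
      exact sum_sqrt_of_card_le_one (fun i => hW.eigenvalues_nonneg i) cardW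
    have tB : (psqrt P).trace.re = Real.sqrt (P.trace.re) := by
      rw [trace_psqrt hP, my_trace_re_eq hP.1]
      exact sum_sqrt_of_card_le_one (fun i => hP.eigenvalues_nonneg i) cardP
    have habdiff : |W.trace.re - P.trace.re| ≤ 2 * N1 := by
      have e : W.trace.re - P.trace.re = (W - P).trace.re := by
        rw [Matrix.trace_sub, Complex.sub_re]
      rw [e]
      exact (abs_trace_re_le_traceNorm (hW.1.sub hP.1)).trans hWP2
    have hstep : |(psqrt W).trace.re - (psqrt P).trace.re| ≤ Real.sqrt (2 * N1) := by
      rw [tA, tB]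
      refine (sqrt_sub_sqrt_le _ _ (trace_re_nonneg_psd hW) (trace_re_nonneg_psd hP)).trans ?_
      exact Real.sqrt_le_sqrt habdiff
    rw [← hcase]
    calc |(psqrt W).trace.re - (psqrt P).trace.re| ≤ Real.sqrt (2 * N1) := hstep
      _ = Real.sqrt 2 * Real.sqrt N1 := Real.sqrt_mul (by norm_num) _
      _ = Real.sqrt 2 * ((1:ℕ):ℝ) * Real.sqrt N1 := by norm_num
  · -- r ≥ 2
    have hr2 : (2:ℝ) ≤ (r:ℝ) := by exact_mod_cast hcase
    have hCS := cauchy_schwarz_trace hC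
    have hrankC : ((psqrt W - psqrt P).rank : ℝ) ≤ 2 * r := by
      have h1 : (psqrt W - psqrt P).rank ≤ (psqrt W).rank + (psqrt P).rank :=
        my_rank_sub_le _ _
      have h2 : (psqrt W).rank = W.rank := rank_psqrt hW
      have h3 : (psqrt P).rank = P.rank := rank_psqrt hP
      have h4 : (psqrt W - psqrt P).rank ≤ r + r := by
        refine h1.trans ?_
        rw [h2, h3]
        exact Nat.add_le_add hrankW (hrankP.trans hrankW)
      calc ((psqrt W - psqrt P).rank : ℝ) ≤ ((r + r : ℕ) : ℝ) := by exact_mod_cast h4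
        _ = 2 * r := by push_cast; ring
    have htr2nn : 0 ≤ ((psqrt W - psqrt P) * (psqrt W - psqrt P)).trace.re :=
      trace_mul_self_re_nonneg hC
    have hq1 : Real.sqrt ((psqrt W - psqrt P).rank) ≤ Real.sqrt 2 * Real.sqrt r := by
      rw [← Real.sqrt_mul (by norm_num)]
      exact Real.sqrt_le_sqrt hrankC
    have hq2 : Real.sqrt (((psqrt W - psqrt P) * (psqrt W - psqrt P)).trace.re)
        ≤ Real.sqrt 2 * Real.sqrt N1 := by
      rw [← Real.sqrt_mul (by norm_num)]
      exact Real.sqrt_le_sqrt hPS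
    have hmain : |(psqrt W).trace.re - (psqrt P).trace.re|
        ≤ 2 * Real.sqrt r * Real.sqrt N1 := by
      rw [hdiff]
      refine hCS.trans ?_
      calc Real.sqrt ((psqrt W - psqrt P).rank)
            * Real.sqrt (((psqrt W - psqrt P) * (psqrt W - psqrt P)).trace.re)
          ≤ (Real.sqrt 2 * Real.sqrt r) * (Real.sqrt 2 * Real.sqrt N1) := by
            refine mul_le_mul hq1 hq2 (Real.sqrt_nonneg _) ?_
            positivity
        _ = (Real.sqrt 2 * Real.sqrt 2) * Real.sqrt r * Real.sqrt N1 := by ring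
        _ = 2 * Real.sqrt r * Real.sqrt N1 := by
            rw [Real.mul_self_sqrt (by norm_num)]
    have hnum : 2 * Real.sqrt r ≤ Real.sqrt 2 * r := by
      have hx : (0:ℝ) ≤ (r:ℝ) := by positivity
      have hsq : (2 * Real.sqrt r) ^ 2 ≤ (Real.sqrt 2 * r) ^ 2 := by
        rw [mul_pow, mul_pow, Real.sq_sqrt hx, Real.sq_sqrt (by norm_num : (0:ℝ) ≤ 2)]
        nlinarith
      calc 2 * Real.sqrt r = Real.sqrt ((2 * Real.sqrt r) ^ 2) := by
            rw [Real.sqrt_sq (by positivity)]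
        _ ≤ Real.sqrt ((Real.sqrt 2 * r) ^ 2) := Real.sqrt_le_sqrt hsq
        _ = Real.sqrt 2 * r := Real.sqrt_sq (by positivity)
    calc |(psqrt W).trace.re - (psqrt P).trace.re|
        ≤ 2 * Real.sqrt r * Real.sqrt N1 := hmain
      _ ≤ Real.sqrt 2 * r * Real.sqrt N1 := by
          exact mul_le_mul_of_nonneg_right hnum (Real.sqrt_nonneg _)
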